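/- Let f be continuous on [0,δ], f(0)=0, thrice differentiable on (0,δ], with f''' first strictly decreasing then strictly increasing on (0,δ]. Suppose lim_{w→0⁺} f'(w) > g₁, lim_{w→0⁺} f''(w) < g₂, lim_{w→0⁺} f'''(w) > g₃, and f'''(δ) ≤ g₃. Then f(w) ≥ g(w) for all w ∈ [0,δ]. -/

import Mathlib

theorem stmt_15 (f : ℝ → ℝ) (δ : ℝ) (hδ : 0 < δ) (hf0 : f 0 = 0)
    (hcont : ContinuousOn f (Set.Icc 0 δ))
    (hdiff : ∀ w ∈ Set.Ioc (0:ℝ) δ, DifferentiableAt ℝ f w ∧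
      DifferentiableAt ℝ (deriv f) w ∧ DifferentiableAt ℝ (deriv (deriv f)) w)
    (c : ℝ) (hc : c ∈ Set.Ioc (0:ℝ) δ)
    (hanti : StrictAntiOn (deriv (deriv (deriv f))) (Set.Ioc 0 c))
    (hmono : StrictMonoOn (deriv (deriv (deriv f))) (Set.Icc c δ))
    (g1 g2 g3 : ℝ)
    (hg1 : g1 = 3 * f δ / δ - 2 * deriv f δ + δ * deriv (deriv f) δ / 2)
    (hg2 : g2 = -6 * f δ / δ ^ 2 + 6 * deriv f δ / δ - 2 * deriv (deriv f) δ)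
    (hg3 : g3 = 6 * f δ / δ ^ 3 - 6 * deriv f δ / δ ^ 2 + 3 * deriv (deriv f) δ / δ)
    (g : ℝ → ℝ) (hg : g = fun w => g1 * w + g2 / 2 * w ^ 2 + g3 / 6 * w ^ 3)
    (L1 L2 L3 : EReal)
    (hL1 : Filter.Tendsto (fun w : ℝ => (((deriv f w : ℝ)) : EReal))
      (nhdsWithin 0 (Set.Ioi 0)) (nhds L1))
    (hL2 : Filter.Tendsto (fun w : ℝ => (((deriv (deriv f) w : ℝ)) : EReal))
      (nhdsWithin 0 (Set.Ioi 0)) (nhds L2))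
    (hL3 : Filter.Tendsto (fun w : ℝ => (((deriv (deriv (deriv f)) w : ℝ)) : EReal))
      (nhdsWithin 0 (Set.Ioi 0)) (nhds L3))
    (h1 : (g1 : EReal) < L1) (h2 : L2 < (g2 : EReal)) (h3 : (g3 : EReal) < L3)
    (h4 : deriv (deriv (deriv f)) δ ≤ g3) :
    ∀ w ∈ Set.Icc (0:ℝ) δ, g w ≤ f w := by
  obtain ⟨hc0, hcδ⟩ := hc
  have hδ0 : δ ≠ 0 := ne_of_gt hδ
  -- single crossing of f''' - g3 (once ≤ 0, stays ≤ 0)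
  have key3 : ∀ x ∈ Set.Ioc (0:ℝ) δ, ∀ y ∈ Set.Ioc (0:ℝ) δ, x ≤ y →
      deriv (deriv (deriv f)) x ≤ g3 → deriv (deriv (deriv f)) y ≤ g3 := by
    intro x hx y hy hxy h3x
    rcases le_or_gt y c with hyc | hcy
    · rcases eq_or_lt_of_le hxy with rfl | hlt
      · exact h3x
      · exact le_of_lt (lt_of_lt_of_le
          (hanti ⟨hx.1, hlt.le.trans hyc⟩ ⟨hy.1, hyc⟩ hlt) h3x)
    · rcases eq_or_lt_of_le hy.2 with heq | hlt
      · rw [heq]; exact h4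
      · exact le_trans (le_of_lt (hmono ⟨hcy.le, hy.2⟩ ⟨hcδ, le_refl δ⟩ hlt)) h4
  -- MVT helper on subintervals of (0, δ]
  have mvt : ∀ (φ ψ : ℝ → ℝ), (∀ z ∈ Set.Ioc (0:ℝ) δ, HasDerivAt φ (ψ z) z) →
      ∀ x y : ℝ, 0 < x → x < y → y ≤ δ →
      ∃ z ∈ Set.Ioo x y, ψ z = (φ y - φ x) / (y - x) := by
    intro φ ψ hφ x y hx hxy hyδ
    have hsub : Set.Icc x y ⊆ Set.Ioc 0 δ := fun t ht => ⟨lt_of_lt_of_le hx ht.1, le_trans ht.2 hyδ⟩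
    refine exists_hasDerivAt_eq_slope φ ψ hxy ?_ ?_
    · exact fun t ht => ((hφ t (hsub ht)).continuousAt).continuousWithinAt
    · exact fun t ht => hφ t (hsub (Set.Ioo_subset_Icc_self ht))
  -- derivatives of the auxiliary functions
  have hd2 : ∀ z ∈ Set.Ioc (0:ℝ) δ,
      HasDerivAt (fun w => deriv (deriv f) w - (g2 + g3 * w))
        (deriv (deriv (deriv f)) z - g3) z := by
    intro z hz
    have h1 := (hdiff z hz).2.2.hasDerivAt
    have h2 : HasDerivAt (fun w : ℝ => g2 + g3 * w) g3 z := by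
      simpa using ((hasDerivAt_id z).const_mul g3).const_add g2
    exact h1.sub h2
  have hd1 : ∀ z ∈ Set.Ioc (0:ℝ) δ,
      HasDerivAt (fun w => deriv f w - (g1 + g2 * w + g3 / 2 * w ^ 2))
        (deriv (deriv f) z - (g2 + g3 * z)) z := by
    intro z hz
    have h1 := (hdiff z hz).2.1.hasDerivAt
    have h2 : HasDerivAt (fun w : ℝ => g1 + g2 * w + g3 / 2 * w ^ 2) (g2 + g3 * z) z := by
      have h := (((hasDerivAt_id z).const_mul g2).const_add g1).add
        ((hasDerivAt_pow 2 z).const_mul (g3 / 2))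
      refine h.congr_deriv ?_
      push_cast
      ring
    exact h1.sub h2
  have hd0 : ∀ z ∈ Set.Ioc (0:ℝ) δ,
      HasDerivAt (fun w => f w - g w)
        (deriv f z - (g1 + g2 * z + g3 / 2 * z ^ 2)) z := by
    intro z hz
    have h1 := (hdiff z hz).1.hasDerivAt
    have h2 : HasDerivAt g (g1 + g2 * z + g3 / 2 * z ^ 2) z := by
      rw [hg]
      have h := (((hasDerivAt_id z).const_mul g1).add
        ((hasDerivAt_pow 2 z).const_mul (g2 / 2))).add
        ((hasDerivAt_pow 3 z).const_mul (g3 / 6))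
      refine h.congr_deriv ?_
      push_cast
      ring
    exact h1.sub h2
  -- boundary values at δ
  have e2 : deriv (deriv f) δ - (g2 + g3 * δ) = 0 := by
    rw [hg2, hg3]; field_simp; ring
  have e1 : deriv f δ - (g1 + g2 * δ + g3 / 2 * δ ^ 2) = 0 := by
    rw [hg1, hg2, hg3]; field_simp; ring
  have e0 : f δ - g δ = 0 := by
    rw [hg, hg1, hg2, hg3]; field_simp; ring
  -- single crossing of second level (once ≥ 0, stays ≥ 0)
  have key2 : ∀ x ∈ Set.Ioc (0:ℝ) δ, ∀ y ∈ Set.Ioc (0:ℝ) δ, x ≤ y →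
      0 ≤ deriv (deriv f) x - (g2 + g3 * x) → 0 ≤ deriv (deriv f) y - (g2 + g3 * y) := by
    intro x hx y hy hxy hpx
    by_contra hneg
    push_neg at hneg
    have hyδ : y < δ := by
      rcases lt_or_eq_of_le hy.2 with h | h
      · exact h
      · rw [h] at hneg; linarith
    obtain ⟨z, hz, hzeq⟩ := mvt _ _ hd2 y δ hy.1 hyδ le_rfl
    have hz3 : g3 < deriv (deriv (deriv f)) z := by
      have hpos : (0:ℝ) < ((deriv (deriv f) δ - (g2 + g3 * δ)) -
          (deriv (deriv f) y - (g2 + g3 * y))) / (δ - y) := by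
        apply div_pos (by linarith) (by linarith)
      rw [← hzeq] at hpos
      linarith
    have hxy' : x < y := by
      rcases eq_or_lt_of_le hxy with rfl | h
      · linarith
      · exact h
    obtain ⟨z', hz', hz'eq⟩ := mvt _ _ hd2 x y hx.1 hxy' hy.2
    have hz'3 : deriv (deriv (deriv f)) z' ≤ g3 := by
      have hneg' : ((deriv (deriv f) y - (g2 + g3 * y)) -
          (deriv (deriv f) x - (g2 + g3 * x))) / (y - x) < 0 :=
        div_neg_of_neg_of_pos (by linarith) (by linarith)
      rw [← hz'eq] at hneg'
      linarith
    have hz'mem : z' ∈ Set.Ioc (0:ℝ) δ := ⟨lt_trans hx.1 hz'.1, le_trans hz'.2.le hy.2⟩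
    have hzmem : z ∈ Set.Ioc (0:ℝ) δ := ⟨lt_trans hy.1 hz.1, hz.2.le⟩
    have := key3 z' hz'mem z hzmem (by linarith [hz'.2, hz.1]) hz'3
    linarith
  -- single crossing of first level (once ≤ 0, stays ≤ 0)
  have key1 : ∀ x ∈ Set.Ioc (0:ℝ) δ, ∀ y ∈ Set.Ioc (0:ℝ) δ, x ≤ y →
      deriv f x - (g1 + g2 * x + g3 / 2 * x ^ 2) ≤ 0 →
      deriv f y - (g1 + g2 * y + g3 / 2 * y ^ 2) ≤ 0 := by
    intro x hx y hy hxy hpx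
    by_contra hneg
    push_neg at hneg
    have hyδ : y < δ := by
      rcases lt_or_eq_of_le hy.2 with h | h
      · exact h
      · rw [h] at hneg; linarith
    obtain ⟨z, hz, hzeq⟩ := mvt _ _ hd1 y δ hy.1 hyδ le_rfl
    have hz2 : deriv (deriv f) z - (g2 + g3 * z) < 0 := by
      have : ((deriv f δ - (g1 + g2 * δ + g3 / 2 * δ ^ 2)) -
          (deriv f y - (g1 + g2 * y + g3 / 2 * y ^ 2))) / (δ - y) < 0 :=
        div_neg_of_neg_of_pos (by linarith) (by linarith)
      rw [hzeq]; linarith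
    have hxy' : x < y := by
      rcases eq_or_lt_of_le hxy with rfl | h
      · linarith
      · exact h
    obtain ⟨z', hz', hz'eq⟩ := mvt _ _ hd1 x y hx.1 hxy' hy.2
    have hz'2 : 0 ≤ deriv (deriv f) z' - (g2 + g3 * z') := by
      have : (0:ℝ) < ((deriv f y - (g1 + g2 * y + g3 / 2 * y ^ 2)) -
          (deriv f x - (g1 + g2 * x + g3 / 2 * x ^ 2))) / (y - x) :=
        div_pos (by linarith) (by linarith)
      rw [hz'eq]; linarith
    have hz'mem : z' ∈ Set.Ioc (0:ℝ) δ := ⟨lt_trans hx.1 hz'.1, le_trans hz'.2.le hy.2⟩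
    have hzmem : z ∈ Set.Ioc (0:ℝ) δ := ⟨lt_trans hy.1 hz.1, hz.2.le⟩
    have := key2 z' hz'mem z hzmem (by linarith [hz'.2, hz.1]) hz'2
    linarith
  -- conclusion
  intro w hw
  rcases eq_or_lt_of_le hw.1 with rfl | hw0
  · simp [hg, hf0]
  rcases eq_or_lt_of_le hw.2 with rfl | hwδ
  · linarith
  by_contra hneg
  push_neg at hneg
  have hgcont : Continuous g := by rw [hg]; fun_prop
  have hφcont : ContinuousOn (fun w => f w - g w) (Set.Icc 0 δ) :=
    hcont.sub hgcont.continuousOn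
  -- MVT on [0, w]
  obtain ⟨z1, hz1, hz1eq⟩ := exists_hasDerivAt_eq_slope (fun w => f w - g w)
    (fun z => deriv f z - (g1 + g2 * z + g3 / 2 * z ^ 2)) hw0
    (hφcont.mono (Set.Icc_subset_Icc le_rfl hw.2))
    (fun t ht => hd0 t ⟨ht.1, le_trans ht.2.le hw.2⟩)
  -- MVT on [w, δ]
  obtain ⟨z2, hz2, hz2eq⟩ := mvt _ _ hd0 w δ hw0 hwδ le_rfl
  have hq1 : deriv f z1 - (g1 + g2 * z1 + g3 / 2 * z1 ^ 2) ≤ 0 := by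
    have : ((f w - g w) - (f 0 - g 0)) / (w - 0) < 0 := by
      apply div_neg_of_neg_of_pos _ (by linarith)
      have : g 0 = 0 := by rw [hg]; simp
      rw [hf0, this]; linarith
    rw [hz1eq]; linarith
  have hq2 : 0 < deriv f z2 - (g1 + g2 * z2 + g3 / 2 * z2 ^ 2) := by
    have : (0:ℝ) < ((f δ - g δ) - (f w - g w)) / (δ - w) :=
      div_pos (by linarith) (by linarith)
    rw [hz2eq]; linarith
  have hz1mem : z1 ∈ Set.Ioc (0:ℝ) δ := ⟨hz1.1, le_trans hz1.2.le hw.2⟩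
  have hz2mem : z2 ∈ Set.Ioc (0:ℝ) δ := ⟨lt_trans hw0 hz2.1, hz2.2.le⟩
  have := key1 z1 hz1mem z2 hz2mem (by linarith [hz1.2, hz2.1]) hq1
  linarith
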